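/- Let C be an n×n symmetric real matrix with n ≥ 4. Then the tour ⟨1, 2, …, n⟩ is a master tour for C — that is, for every nonempty subset I ⊆ {1,…,n}, the tour visiting the elements of I in increasing order of their indices has length less than or equal to the length of every tour on I — if and only if C is a Kalmanson matrix. -/

import Mathlib

/-- Length of a walk along a list of nodes (sum of consecutive edge costs). -/
def pathLen {α : Type*} (C : α → α → ℝ) : List α → ℝ
  | [] => 0
  | [_] => 0
  | a :: b :: t => C a b + pathLen C (b :: t)

/-- Length of the closed tour visiting the nodes of `l` in order and
returning from the last node to the first one. -/
def tourLen {α : Type*} (C : α → α → ℝ) (l : List α) : ℝ :=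
  pathLen C (l ++ l.take 1)

/-- `l` is a tour on the finite set `I`: an enumeration of the elements of `I`,
each appearing exactly once. -/
def IsTourOn {α : Type*} [DecidableEq α] (I : Finset α) (l : List α) : Prop :=
  l.Nodup ∧ l.toFinset = I

/-- Kalmanson conditions for a symmetric matrix indexed by `Fin n`. -/
def IsKalmanson {n : ℕ} (C : Fin n → Fin n → ℝ) : Prop :=
  ∀ i j k l : Fin n, i < j → j < k → k < l →
    C i j + C k l ≤ C i k + C j l ∧ C i l + C j k ≤ C i k + C j l

section
variable {n : ℕ} (C : Fin n → Fin n → ℝ)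

lemma pathLen_concat2 (x y : Fin n) : ∀ (s : List (Fin n)),
    pathLen C (s ++ [x, y]) = pathLen C (s ++ [x]) + C x y
  | [] => by simp [pathLen]
  | [c] => by simp [pathLen]
  | c :: d :: s => by
      have ih := pathLen_concat2 x y (d :: s)
      simp only [List.cons_append, List.append_eq, pathLen] at ih ⊢
      rw [ih]; ring

lemma tourLen_cons_rot (a : Fin n) (t : List (Fin n)) :
    tourLen C (a :: t) = tourLen C (t ++ [a]) := by
  cases t with
  | nil => rfl
  | cons c t' =>
    have h := pathLen_concat2 C a c (c :: t')
    simp only [tourLen, List.take, List.cons_append, List.append_assoc,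
      List.singleton_append, List.nil_append, List.append_eq, pathLen] at h ⊢
    linarith

lemma tourLen_rot (u v : List (Fin n)) : tourLen C (u ++ v) = tourLen C (v ++ u) := by
  induction u generalizing v with
  | nil => simp
  | cons a u' ih =>
    calc tourLen C ((a :: u') ++ v) = tourLen C (a :: (u' ++ v)) := by simp
    _ = tourLen C ((u' ++ v) ++ [a]) := tourLen_cons_rot C a _
    _ = tourLen C (u' ++ (v ++ [a])) := by simp
    _ = tourLen C ((v ++ [a]) ++ u') := ih _
    _ = tourLen C (v ++ (a :: u')) := by simp

lemma tourLen_concat_insert (a b m : Fin n) (w3 : List (Fin n)) :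
    tourLen C ((a :: w3 ++ [b]) ++ [m]) =
      tourLen C (a :: w3 ++ [b]) + (C b m + C m a - C b a) := by
  have h1 := pathLen_concat2 C m a ((a :: w3) ++ [b])
  have h2 := pathLen_concat2 C b m (a :: w3)
  have h3 := pathLen_concat2 C b a (a :: w3)
  simp only [tourLen, List.take, List.cons_append, List.append_assoc,
    List.singleton_append, List.nil_append, List.append_eq, pathLen] at h1 h2 h3 ⊢
  linarith

lemma insert_cost_aux (hk : IsKalmanson C) (hsym : ∀ i j, C i j = C j i)
    {p q x y m : Fin n} (hpx : p ≤ x) (hxy : x < y) (hyq : y ≤ q) (hqm : q < m) :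
    C q m + C m p - C q p ≤ C x m + C m y - C x y := by
  have hym : y < m := lt_of_le_of_lt hyq hqm
  have h1 : C p m + C x y ≤ C p y + C x m := by
    rcases eq_or_lt_of_le hpx with rfl | h
    · linarith
    · exact (hk p x y m h hxy hym).2
  have h2 : C p y + C q m ≤ C p q + C y m := by
    rcases eq_or_lt_of_le hyq with rfl | h
    · linarith
    · exact (hk p y q m (lt_of_le_of_lt hpx hxy) h hqm).1
  linarith [hsym p m, hsym p q, hsym y m, hsym m p, hsym q p, hsym m y]

lemma insert_cost (hk : IsKalmanson C) (hsym : ∀ i j, C i j = C j i)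
    {p q x y m : Fin n} (hpx : p ≤ x) (hxq : x ≤ q) (hpy : p ≤ y) (hyq : y ≤ q)
    (hqm : q < m) (hxy : x ≠ y) :
    C q m + C m p - C q p ≤ C x m + C m y - C x y := by
  rcases lt_or_gt_of_ne hxy with h | h
  · exact insert_cost_aux C hk hsym hpx h hyq hqm
  · have := insert_cost_aux C hk hsym hpy h hxq hqm
    linarith [hsym x m, hsym m y, hsym x y, hsym y m, hsym m x, hsym y x]

lemma sort_max_decomp {I : Finset (Fin n)} (hne : I.Nonempty) :
    I.sort (· ≤ ·) = (I.erase (I.max' hne)).sort (· ≤ ·) ++ [I.max' hne] := by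
  set m := I.max' hne with hm
  have hmI : m ∈ I := I.max'_mem hne
  refine (fun hp hs => List.Perm.eq_of_pairwise' (Finset.pairwise_sort _ _) hs hp) ?_ ?_
  · apply List.perm_of_nodup_nodup_toFinset_eq (Finset.sort_nodup _ _)
    · refine List.Nodup.append (Finset.sort_nodup _ _) (List.nodup_singleton m) ?_
      intro x hx hx'
      simp only [List.mem_singleton] at hx'
      subst hx'
      exact absurd (Finset.mem_sort _ |>.mp hx) (fun h => (Finset.notMem_erase m I) h)
    · rw [Finset.sort_toFinset, List.toFinset_append, Finset.sort_toFinset]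
      have h1 : ([m] : List (Fin n)).toFinset = {m} := by simp
      rw [h1, Finset.union_comm, ← Finset.insert_eq, Finset.insert_erase hmI]
  · apply List.pairwise_append.mpr
    refine ⟨Finset.pairwise_sort _ _, List.pairwise_singleton _ m, ?_⟩
    intro x hx y hy
    simp only [List.mem_singleton] at hy
    subst hy
    exact I.le_max' x (Finset.mem_of_mem_erase ((Finset.mem_sort _).mp hx))

lemma tour_reduce {I : Finset (Fin n)} {m : Fin n}
    (l : List (Fin n)) (hnd : l.Nodup) (hft : l.toFinset = I) (hmI : m ∈ I)
    (hc : 3 ≤ I.card) :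
    ∃ a b w3, (a :: w3 ++ [b]).Nodup ∧ (a :: w3 ++ [b]).toFinset = I.erase m ∧
      tourLen C l = tourLen C (a :: w3 ++ [b]) + (C b m + C m a - C b a) := by
  have hml : m ∈ l := by rw [← List.mem_toFinset, hft]; exact hmI
  obtain ⟨u, v, rfl⟩ := List.append_of_mem hml
  have hperm : List.Perm (u ++ m :: v) (m :: (v ++ u)) := by
    have h1 : List.Perm (u ++ m :: v) ((m :: v) ++ u) := List.perm_append_comm
    simpa using h1
  have hnd2 : (m :: (v ++ u)).Nodup := hperm.nodup hnd
  have hmw : m ∉ (v ++ u) := (List.nodup_cons.mp hnd2).1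
  have hwnd : (v ++ u).Nodup := (List.nodup_cons.mp hnd2).2
  have hins : insert m (v ++ u).toFinset = I := by
    rw [← hft, List.toFinset_eq_of_perm _ _ hperm]; simp
  have hwft : (v ++ u).toFinset = I.erase m := by
    rw [← hins, Finset.erase_insert (by simpa using hmw)]
  have hwlen : (v ++ u).length = I.card - 1 := by
    have h := List.toFinset_card_of_nodup hwnd
    rw [hwft, Finset.card_erase_of_mem hmI] at h
    omega
  obtain ⟨a, t, hat⟩ : ∃ a t, v ++ u = a :: t := by
    cases h : v ++ u with
    | nil => rw [h] at hwlen; simp at hwlen; omega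
    | cons a t => exact ⟨a, t, rfl⟩
  obtain (rfl | ⟨w3, b, rfl⟩) := t.eq_nil_or_concat'
  · rw [hat] at hwlen; simp at hwlen; omega
  have hat' : v ++ u = a :: w3 ++ [b] := by rw [hat]; simp
  refine ⟨a, b, w3, by rw [← hat']; exact hwnd, by rw [← hat']; exact hwft, ?_⟩
  calc tourLen C (u ++ m :: v) = tourLen C ((m :: v) ++ u) := tourLen_rot C u (m :: v)
  _ = tourLen C (m :: (v ++ u)) := by simp
  _ = tourLen C ((v ++ u) ++ [m]) := tourLen_cons_rot C m (v ++ u)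
  _ = tourLen C ((a :: w3 ++ [b]) ++ [m]) := by rw [hat']
  _ = _ := tourLen_concat_insert C a b m w3

lemma sort_reduce {I : Finset (Fin n)} (hne : I.Nonempty) (hc : 3 ≤ I.card) :
    ∃ p q, (∀ z ∈ I.erase (I.max' hne), p ≤ z) ∧ (∀ z ∈ I.erase (I.max' hne), z ≤ q) ∧
      p ∈ I.erase (I.max' hne) ∧ q ∈ I.erase (I.max' hne) ∧
      tourLen C (I.sort (· ≤ ·)) =
        tourLen C ((I.erase (I.max' hne)).sort (· ≤ ·)) +
          (C q (I.max' hne) + C (I.max' hne) p - C q p) := by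
  set m := I.max' hne with hm
  have hlen : ((I.erase m).sort (· ≤ ·)).length = I.card - 1 := by
    rw [Finset.length_sort, Finset.card_erase_of_mem (I.max'_mem hne)]
  obtain ⟨p, t, hat⟩ : ∃ p t, (I.erase m).sort (· ≤ ·) = p :: t := by
    cases h : (I.erase m).sort (· ≤ ·) with
    | nil => rw [h] at hlen; simp at hlen; omega
    | cons a t => exact ⟨a, t, rfl⟩
  obtain (rfl | ⟨w3, q, rfl⟩) := t.eq_nil_or_concat'
  · rw [hat] at hlen; simp at hlen; omega
  have hat' : (I.erase m).sort (· ≤ ·) = p :: w3 ++ [q] := by rw [hat]; simp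
  have hsorted : List.Pairwise (· ≤ ·) (p :: (w3 ++ [q])) := by
    rw [← hat]; exact Finset.pairwise_sort _ _
  have hsorted' : List.Pairwise (· ≤ ·) ((p :: w3) ++ [q]) := by
    rw [List.cons_append]; exact hsorted
  have hpw := List.pairwise_append.mp hsorted'
  refine ⟨p, q, ?_, ?_, ?_, ?_, ?_⟩
  · intro z hz
    have hz' : z ∈ p :: (w3 ++ [q]) := by
      rw [← hat]; exact (Finset.mem_sort _).mpr hz
    rcases List.mem_cons.mp hz' with rfl | h
    · exact le_refl z
    · exact List.rel_of_pairwise_cons hsorted h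
  · intro z hz
    have hz' : z ∈ (p :: w3) ++ [q] := by
      rw [List.cons_append, ← hat]; exact (Finset.mem_sort _).mpr hz
    rcases List.mem_append.mp hz' with h | h
    · exact hpw.2.2 z h q (by simp)
    · simp only [List.mem_singleton] at h; subst h; exact le_refl z
  · rw [← Finset.mem_sort (· ≤ ·), hat]; simp
  · rw [← Finset.mem_sort (· ≤ ·), hat]; simp
  · rw [sort_max_decomp hne, hat']
    exact tourLen_concat_insert C p q m w3

lemma master_of_kalmanson (hsym : ∀ i j, C i j = C j i) (hk : IsKalmanson C) :
    ∀ (N : ℕ) (I : Finset (Fin n)), I.card ≤ N → I.Nonempty →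
      ∀ l : List (Fin n), l.Nodup → l.toFinset = I →
        tourLen C (I.sort (· ≤ ·)) ≤ tourLen C l := by
  intro N
  induction N with
  | zero => intro I hc hne l _ _
            exact absurd (Finset.card_pos.mpr hne) (by omega)
  | succ N ih =>
    intro I hcard hne l hnd hft
    have hlen : l.length = I.card := by rw [← hft, List.toFinset_card_of_nodup hnd]
    by_cases hsmall : I.card ≤ 2
    · have hc01 : I.card = 1 ∨ I.card = 2 := by
        have := Finset.card_pos.mpr hne; omega
      rcases hc01 with h1 | h2
      · obtain ⟨x, rfl⟩ := Finset.card_eq_one.mp h1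
        obtain ⟨y, rfl⟩ : ∃ y, l = [y] := by
          rw [h1] at hlen
          cases l with
          | nil => simp at hlen
          | cons a t =>
            cases t with
            | nil => exact ⟨a, rfl⟩
            | cons b t' => simp at hlen
        have hyx : y = x := by
          have : y ∈ ({x} : Finset (Fin n)) := by rw [← hft]; simp
          simpa using this
        subst hyx
        rw [Finset.sort_singleton]
      · obtain ⟨a, b, hab0⟩ : ∃ a b, l = [a, b] := by
          rw [h2] at hlen
          cases l with
          | nil => simp at hlen
          | cons a t =>
            cases t with
            | nil => simp at hlen
            | cons b t' =>
              cases t' with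
              | nil => exact ⟨a, b, rfl⟩
              | cons c t'' => simp at hlen
        subst hab0
        have hab : a ≠ b := by simpa using hnd
        have hslen : (I.sort (· ≤ ·)).length = 2 := by rw [Finset.length_sort, h2]
        obtain ⟨u, r, hs⟩ : ∃ u r, I.sort (· ≤ ·) = [u, r] := by
          cases h : I.sort (· ≤ ·) with
          | nil => rw [h] at hslen; simp at hslen
          | cons u t =>
            cases t with
            | nil => rw [h] at hslen; simp at hslen
            | cons r t' =>
              cases t' with
              | nil => exact ⟨u, r, rfl⟩
              | cons c t'' => rw [h] at hslen; simp at hslen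
        have hur : u ≠ r := by
          have := Finset.sort_nodup I (· ≤ ·)
          rw [hs] at this; simpa using this
        have humem : u = a ∨ u = b := by
          have : u ∈ I.sort (· ≤ ·) := by rw [hs]; simp
          have : u ∈ I := (Finset.mem_sort _).mp this
          rw [← hft] at this; simpa using this
        have hrmem : r = a ∨ r = b := by
          have : r ∈ I.sort (· ≤ ·) := by rw [hs]; simp
          have : r ∈ I := (Finset.mem_sort _).mp this
          rw [← hft] at this; simpa using this
        rw [hs]
        simp only [tourLen, List.take, List.cons_append, List.nil_append,
          List.append_eq, pathLen]
        rcases humem with rfl | rfl <;> rcases hrmem with rfl | rfl <;>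
          first
            | (exact absurd rfl hur)
            | linarith [hsym u r, hsym r u]
    · have hc3 : 3 ≤ I.card := by omega
      obtain ⟨p, q, hple, hqle, hpmem, hqmem, hsort⟩ := sort_reduce C hne hc3
      obtain ⟨a, b, w3, hwnd, hwft, hl⟩ := tour_reduce C l hnd hft (I.max'_mem hne) hc3
      set m := I.max' hne with hm
      have hne' : (I.erase m).Nonempty := ⟨p, hpmem⟩
      have hcard' : (I.erase m).card ≤ N := by
        rw [Finset.card_erase_of_mem (I.max'_mem hne)]; omega
      have hIH := ih (I.erase m) hcard' hne' _ hwnd hwft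
      have hamem : a ∈ I.erase m := by rw [← hwft]; simp
      have hbmem : b ∈ I.erase m := by rw [← hwft]; simp
      have hab : a ≠ b := by
        have h := (List.nodup_cons.mp hwnd).1
        intro hEq
        exact h (by rw [hEq]; simp)
      have hqm : q < m :=
        lt_of_le_of_ne (I.le_max' q (Finset.mem_of_mem_erase hqmem))
          (Finset.ne_of_mem_erase hqmem)
      have hcost := insert_cost C hk hsym (hple b hbmem) (hqle b hbmem)
        (hple a hamem) (hqle a hamem) hqm (Ne.symm hab)
      rw [hsort, hl]
      linarith [hIH]

end

theorem master_tour_iff_kalmanson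
    {n : ℕ} (hn : 4 ≤ n) (C : Fin n → Fin n → ℝ)
    (hsym : ∀ i j, C i j = C j i) :
    (∀ I : Finset (Fin n), I.Nonempty →
        ∀ l : List (Fin n), IsTourOn I l →
          tourLen C (I.sort (· ≤ ·)) ≤ tourLen C l) ↔ IsKalmanson C := by
  constructor
  · intro hM i j k l hij hjk hkl
    have hik : i < k := hij.trans hjk
    have hjl : j < l := hjk.trans hkl
    have hil : i < l := hik.trans hkl
    have hnd4 : ([i, j, k, l] : List (Fin n)).Nodup := by
      simp [List.nodup_cons, hij.ne, hik.ne, hil.ne, hjk.ne, hjl.ne, hkl.ne]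
    have hs : ({i, j, k, l} : Finset (Fin n)).sort (· ≤ ·) = [i, j, k, l] := by
      have h1 : ([i, j, k, l] : List (Fin n)).toFinset = {i, j, k, l} := by simp
      rw [← h1]
      exact (List.toFinset_sort _ hnd4).mpr
        (by simp [List.pairwise_cons, hij.le, hik.le, hil.le, hjk.le, hjl.le, hkl.le])
    have hne4 : ({i, j, k, l} : Finset (Fin n)).Nonempty := ⟨i, by simp⟩
    have t1 := hM {i, j, k, l} hne4 [i, k, j, l]
      ⟨by simp [List.nodup_cons, hij.ne, hik.ne, hil.ne, hjk.ne, hjl.ne, hkl.ne,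
          (hjk.ne).symm],
       by ext x; simp; tauto⟩
    have t2 := hM {i, j, k, l} hne4 [i, j, l, k]
      ⟨by simp [List.nodup_cons, hij.ne, hik.ne, hil.ne, hjk.ne, hjl.ne, hkl.ne,
          (hkl.ne).symm],
       by ext x; simp; tauto⟩
    rw [hs] at t1 t2
    simp only [tourLen, List.take, List.cons_append, List.nil_append,
      List.append_eq, pathLen] at t1 t2
    constructor
    · linarith [hsym k j, hsym j k]
    · linarith [hsym l i, hsym k i, hsym l k, hsym k l, hsym i l, hsym i k]
  · intro hk I hne l hl
    exact master_of_kalmanson C hsym hk I.card I le_rfl hne l hl.1 hl.2
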